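/- For every $\sigma > 0$, the Mills ratio of the standard Gaussian satisfies $\frac{1 - \Phi(\sigma)}{\phi(\sigma)} > \frac{\pi}{\sqrt{2\pi + \sigma^2} + (\pi - 1)\sigma}$, where $\phi$ and $\Phi$ are the standard Gaussian density and distribution function. -/

import Mathlib

open MeasureTheory

/-- The standard Gaussian density. -/
noncomputable def stdGaussPdf (s : ℝ) : ℝ :=
  (Real.sqrt (2 * Real.pi))⁻¹ * Real.exp (-s ^ 2 / 2)

/-- The standard Gaussian cumulative distribution function. -/
noncomputable def stdGaussCdf (s : ℝ) : ℝ := ∫ t in Set.Iic s, stdGaussPdf t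

open Real Set Filter Topology

lemma pdf_pos (s : ℝ) : 0 < stdGaussPdf s := by
  unfold stdGaussPdf
  positivity

lemma pdf_eq (s : ℝ) : stdGaussPdf s = (Real.sqrt (2 * Real.pi))⁻¹ * Real.exp (-(1/2) * s ^ 2) := by
  unfold stdGaussPdf; ring_nf

lemma pdf_cont : Continuous stdGaussPdf := by
  unfold stdGaussPdf
  fun_prop

lemma pdf_integrable : Integrable stdGaussPdf := by
  have h := (integrable_exp_neg_mul_sq (b := 1/2) (by norm_num)).const_mul (Real.sqrt (2 * Real.pi))⁻¹
  refine h.congr ?_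
  filter_upwards with x
  rw [pdf_eq]

lemma integral_pdf : ∫ s, stdGaussPdf s = 1 := by
  simp_rw [pdf_eq]
  rw [MeasureTheory.integral_const_mul, integral_gaussian]
  rw [show Real.pi / (1/2) = 2 * Real.pi by ring]
  rw [inv_mul_cancel₀]
  positivity

lemma cdf_zero : stdGaussCdf 0 = 1/2 := by
  have heven : ∀ x : ℝ, stdGaussPdf (-x) = stdGaussPdf x := by
    intro x; unfold stdGaussPdf; rw [neg_pow]; ring_nf
  have h1 : stdGaussCdf 0 = ∫ x in Set.Ioi (0:ℝ), stdGaussPdf x := by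
    unfold stdGaussCdf
    rw [← neg_zero, ← integral_comp_neg_Iic]
    simp_rw [heven, neg_zero]
  have h2 : stdGaussCdf 0 + ∫ x in Set.Ioi (0:ℝ), stdGaussPdf x = 1 := by
    unfold stdGaussCdf
    rw [← integral_pdf]
    rw [← setIntegral_union (Set.Iic_disjoint_Ioi le_rfl) measurableSet_Ioi
      pdf_integrable.integrableOn pdf_integrable.integrableOn, Set.Iic_union_Ioi,
      setIntegral_univ]
  rw [h1] at h2 ⊢
  linarith

lemma hasDerivAt_cdf (x : ℝ) : HasDerivAt stdGaussCdf (stdGaussPdf x) x := by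
  have key : ∀ y : ℝ, stdGaussCdf y = stdGaussCdf 0 + ∫ t in (0:ℝ)..y, stdGaussPdf t := by
    intro y
    unfold stdGaussCdf
    rw [← intervalIntegral.integral_Iic_sub_Iic pdf_integrable.integrableOn
      pdf_integrable.integrableOn]
    ring
  have hd : HasDerivAt (fun y => stdGaussCdf 0 + ∫ t in (0:ℝ)..y, stdGaussPdf t)
      (stdGaussPdf x) x := by
    apply HasDerivAt.const_add
    exact intervalIntegral.integral_hasDerivAt_right
      (pdf_integrable.intervalIntegrable)
      (pdf_cont.stronglyMeasurableAtFilter _ _)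
      pdf_cont.continuousAt
  exact hd.congr_of_eventuallyEq (Filter.Eventually.of_forall key)

lemma cdf_tendsto : Tendsto stdGaussCdf atTop (𝓝 1) := by
  have := tendsto_setIntegral_of_monotone (μ := volume) (f := stdGaussPdf)
      (s := fun r : ℝ => Set.Iic r) (fun r => measurableSet_Iic)
      (fun a b hab => Set.Iic_subset_Iic.mpr hab) (pdf_integrable.integrableOn)
  rw [Set.iUnion_Iic, setIntegral_univ, integral_pdf] at this
  exact this

noncomputable def Sf (t : ℝ) : ℝ := Real.sqrt (2*Real.pi + t^2)
noncomputable def Df (t : ℝ) : ℝ := Sf t + (Real.pi - 1) * t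
noncomputable def gf (t : ℝ) : ℝ := 1 - stdGaussCdf t - Real.pi * stdGaussPdf t / Df t

lemma Sf_pos (t : ℝ) : 0 < Sf t := by
  unfold Sf
  apply Real.sqrt_pos.mpr
  nlinarith [Real.pi_pos, sq_nonneg t]

lemma Sf_sq (t : ℝ) : Sf t ^ 2 = 2*Real.pi + t^2 := by
  unfold Sf
  rw [Real.sq_sqrt]
  nlinarith [Real.pi_pos, sq_nonneg t]

lemma Sf_gt (t : ℝ) (ht : 0 ≤ t) : t < Sf t := by
  nlinarith [Sf_pos t, Sf_sq t, Real.pi_pos]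

lemma Df_pos (t : ℝ) (ht : 0 ≤ t) : 0 < Df t := by
  unfold Df
  nlinarith [Sf_pos t, Real.pi_gt_three]

lemma hasDerivAt_Sf (t : ℝ) : HasDerivAt Sf (t / Sf t) t := by
  have h1 : HasDerivAt (fun x : ℝ => 2*Real.pi + x^2) (2*t) t := by
    simpa using ((hasDerivAt_pow 2 t).const_add (2*Real.pi))
  have h2 := (Real.hasDerivAt_sqrt (x := 2*Real.pi + t^2)
    (by nlinarith [Real.pi_pos, sq_nonneg t])).comp t h1
  refine h2.congr_deriv ?_
  unfold Sf
  field_simp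

lemma hasDerivAt_pdf (t : ℝ) : HasDerivAt stdGaussPdf (-t * stdGaussPdf t) t := by
  have h1 : HasDerivAt (fun x : ℝ => -x^2/2) (-t) t := by
    have := ((hasDerivAt_pow 2 t).neg).div_const 2
    refine this.congr_deriv ?_
    ring
  have h2 := (Real.hasDerivAt_exp (-t^2/2)).comp t h1
  have := h2.const_mul (Real.sqrt (2 * Real.pi))⁻¹
  refine this.congr_deriv ?_
  unfold stdGaussPdf
  ring

lemma hasDerivAt_gf (t : ℝ) (ht : 0 ≤ t) :
    HasDerivAt gf (-stdGaussPdf t -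
      (Real.pi * (-t * stdGaussPdf t) * Df t -
        Real.pi * stdGaussPdf t * (t / Sf t + (Real.pi - 1))) / (Df t)^2) t := by
  have hD : HasDerivAt Df (t / Sf t + (Real.pi - 1)) t := by
    unfold Df
    exact ((hasDerivAt_Sf t).add (((hasDerivAt_id t).const_mul (Real.pi - 1)))).congr_deriv (by ring)
  have hnum : HasDerivAt (fun x => Real.pi * stdGaussPdf x) (Real.pi * (-t * stdGaussPdf t)) t :=
    (hasDerivAt_pdf t).const_mul Real.pi
  have hq := hnum.div hD (ne_of_gt (Df_pos t ht))
  have hc : HasDerivAt (fun x => 1 - stdGaussCdf x) (-stdGaussPdf t) t := by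
    simpa using ((hasDerivAt_cdf t).const_sub 1)
  have := hc.sub hq
  exact this

lemma key_ident (t s : ℝ) (hs : s^2 = 2*Real.pi + t^2) :
    (s + (Real.pi-1)*t)^2*s*(s+t) - Real.pi*t*(s + (Real.pi-1)*t)*s*(s+t)
      - Real.pi*(t+(Real.pi-1)*s)*(s+t)
      = Real.pi*(2*Real.pi*(3-Real.pi)+(Real.pi-2)*t*(s-t)) := by
  linear_combination (s^2 + (Real.pi-1)*s*t + Real.pi*(3-Real.pi)) * hs

lemma gderiv_rewrite (t : ℝ) (ht : 0 < t) :
    -stdGaussPdf t -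
      (Real.pi * (-t * stdGaussPdf t) * Df t -
        Real.pi * stdGaussPdf t * (t / Sf t + (Real.pi - 1))) / (Df t)^2
    = stdGaussPdf t * (Real.pi*t*(Df t)*(Sf t) + Real.pi*t + Real.pi*(Real.pi-1)*(Sf t)
        - (Df t)^2*(Sf t)) / ((Df t)^2 * Sf t) := by
  have hs := Sf_pos t
  have hd := Df_pos t ht.le
  field_simp
  ring

lemma R_sign_num (t : ℝ) (ht : 0 < t) :
    ((Df t)^2*(Sf t) - Real.pi*t*(Df t)*(Sf t) - Real.pi*(t+(Real.pi-1)*(Sf t))) * (Sf t + t)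
      = Real.pi*(2*Real.pi*(3-Real.pi)+(Real.pi-2)*t*(Sf t-t)) := by
  have h := key_ident t (Sf t) (Sf_sq t)
  have hd : Df t = Sf t + (Real.pi-1)*t := rfl
  rw [hd]
  linear_combination h

lemma m_mono {a b : ℝ} (ha : 0 < a) (hab : a < b) :
    a*(Sf a - a) < b*(Sf b - b) := by
  have hb : 0 < b := ha.trans hab
  have h1 : a * Sf b < b * Sf a := by
    have hsq : (a*Sf b)^2 < (b*Sf a)^2 := by
      have ea : a^2 * Sf b^2 = a^2*(2*Real.pi+b^2) := by rw [Sf_sq b]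
      have eb : b^2 * Sf a^2 = b^2*(2*Real.pi+a^2) := by rw [Sf_sq a]
      have hab2 : a^2 < b^2 := by nlinarith
      nlinarith [ea, eb, mul_lt_mul_of_pos_left hab2 Real.pi_pos]
    exact lt_of_pow_lt_pow_left₀ 2 (mul_pos hb (Sf_pos a)).le hsq
  have e1 : a*(Sf a - a)*(Sf a + a) = 2*Real.pi*a := by
    linear_combination a * (Sf_sq a)
  have e2 : b*(Sf b - b)*(Sf b + b) = 2*Real.pi*b := by
    linear_combination b * (Sf_sq b)
  nlinarith [e1, e2, h1, mul_pos (add_pos (Sf_pos a) ha) (add_pos (Sf_pos b) hb),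
    Real.pi_pos, mul_pos ha hb, Sf_gt a ha.le, Sf_gt b hb.le,
    mul_pos ha (sub_pos.mpr (Sf_gt a ha.le)), mul_pos hb (sub_pos.mpr (Sf_gt b hb.le)),
    add_pos (Sf_pos a) ha, add_pos (Sf_pos b) hb]

lemma gderiv_pos (t : ℝ) (ht : 0 < t)
    (hR : 2*Real.pi*(3-Real.pi)+(Real.pi-2)*t*(Sf t-t) < 0) :
    0 < -stdGaussPdf t -
      (Real.pi * (-t * stdGaussPdf t) * Df t -
        Real.pi * stdGaussPdf t * (t / Sf t + (Real.pi - 1))) / (Df t)^2 := by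
  rw [gderiv_rewrite t ht]
  have hnum : 0 < Real.pi*t*(Df t)*(Sf t) + Real.pi*t + Real.pi*(Real.pi-1)*(Sf t)
      - (Df t)^2*(Sf t) := by
    nlinarith [R_sign_num t ht, add_pos (Sf_pos t) ht, Real.pi_pos,
      mul_pos Real.pi_pos (neg_pos.mpr hR)]
  have := mul_pos (mul_pos (pdf_pos t) hnum)
    (inv_pos.mpr (mul_pos (pow_pos (Df_pos t ht.le) 2) (Sf_pos t)))
  calc (0:ℝ) < _ := this
    _ = _ := by ring

lemma gderiv_neg (t : ℝ) (ht : 0 < t)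
    (hR : 0 < 2*Real.pi*(3-Real.pi)+(Real.pi-2)*t*(Sf t-t)) :
    -stdGaussPdf t -
      (Real.pi * (-t * stdGaussPdf t) * Df t -
        Real.pi * stdGaussPdf t * (t / Sf t + (Real.pi - 1))) / (Df t)^2 < 0 := by
  rw [gderiv_rewrite t ht]
  have hnum : Real.pi*t*(Df t)*(Sf t) + Real.pi*t + Real.pi*(Real.pi-1)*(Sf t)
      - (Df t)^2*(Sf t) < 0 := by
    nlinarith [R_sign_num t ht, add_pos (Sf_pos t) ht, Real.pi_pos,
      mul_pos Real.pi_pos hR]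
  have := mul_pos (mul_pos (pdf_pos t) (neg_pos.mpr hnum))
    (inv_pos.mpr (mul_pos (pow_pos (Df_pos t ht.le) 2) (Sf_pos t)))
  calc stdGaussPdf t * (Real.pi*t*(Df t)*(Sf t) + Real.pi*t + Real.pi*(Real.pi-1)*(Sf t)
        - (Df t)^2*(Sf t)) / ((Df t)^2 * Sf t)
      = -(stdGaussPdf t * -(Real.pi*t*(Df t)*(Sf t) + Real.pi*t + Real.pi*(Real.pi-1)*(Sf t)
        - (Df t)^2*(Sf t)) * ((Df t)^2 * Sf t)⁻¹) := by ring
    _ < 0 := by linarith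

lemma gf_zero : gf 0 = 0 := by
  have h2π : (0:ℝ) ≤ 2*Real.pi := by positivity
  have hs : Real.sqrt (2*Real.pi) * Real.sqrt (2*Real.pi) = 2*Real.pi := Real.mul_self_sqrt h2π
  have hsp : 0 < Real.sqrt (2*Real.pi) := Real.sqrt_pos.mpr (by positivity)
  have s2 : Real.sqrt 2 * Real.sqrt 2 = 2 := Real.mul_self_sqrt (by norm_num)
  have sp : Real.sqrt Real.pi * Real.sqrt Real.pi = Real.pi :=
    Real.mul_self_sqrt Real.pi_pos.le
  have s2p : 0 < Real.sqrt 2 := by positivity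
  have spp : 0 < Real.sqrt Real.pi := Real.sqrt_pos.mpr Real.pi_pos
  unfold gf Df Sf stdGaussPdf
  rw [cdf_zero]
  norm_num
  field_simp
  nlinarith [s2, sp, s2p, spp, mul_pos s2p spp]

lemma pdf_tendsto : Tendsto stdGaussPdf atTop (𝓝 0) := by
  have h1 : Tendsto (fun t : ℝ => t^2/2) atTop atTop :=
    (tendsto_pow_atTop two_ne_zero).atTop_div_const (by norm_num)
  have h2 := Real.tendsto_exp_neg_atTop_nhds_zero.comp h1
  have h3 := h2.const_mul (Real.sqrt (2*Real.pi))⁻¹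
  rw [mul_zero] at h3
  refine h3.congr fun t => ?_
  unfold stdGaussPdf
  simp only [Function.comp_apply]
  rw [neg_div]

lemma Df_ge_one (t : ℝ) (ht : 0 ≤ t) : 1 ≤ Df t := by
  have h1 : Real.sqrt (2*Real.pi) ≤ Sf t := by
    apply Real.sqrt_le_sqrt
    nlinarith [sq_nonneg t]
  have h2 : (1:ℝ) ≤ Real.sqrt (2*Real.pi) := by
    rw [show (1:ℝ) = Real.sqrt 1 by simp]
    apply Real.sqrt_le_sqrt
    nlinarith [Real.pi_gt_three]
  unfold Df
  nlinarith [Real.pi_gt_three]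

lemma gf_tendsto : Tendsto gf atTop (𝓝 0) := by
  have h1 : Tendsto (fun t => 1 - stdGaussCdf t) atTop (𝓝 0) := by
    have := cdf_tendsto.const_sub 1
    simpa using this
  have h2 : Tendsto (fun t => Real.pi * stdGaussPdf t / Df t) atTop (𝓝 0) := by
    have hup : Tendsto (fun t => Real.pi * stdGaussPdf t) atTop (𝓝 0) := by
      have := pdf_tendsto.const_mul Real.pi
      simpa using this
    apply tendsto_of_tendsto_of_tendsto_of_le_of_le' tendsto_const_nhds hup
    · filter_upwards [eventually_ge_atTop (0:ℝ)] with t ht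
      exact div_nonneg (mul_nonneg Real.pi_pos.le (pdf_pos t).le) (Df_pos t ht).le
    · filter_upwards [eventually_ge_atTop (0:ℝ)] with t ht
      exact div_le_self (mul_nonneg Real.pi_pos.le (pdf_pos t).le) (Df_ge_one t ht)
  have h3 := h1.sub h2
  rw [sub_zero] at h3
  exact h3

lemma gf_pos (σ : ℝ) (hσ : 0 < σ) : 0 < gf σ := by
  have hcont : ∀ t : ℝ, 0 ≤ t → ContinuousAt gf t := fun t ht =>
    (hasDerivAt_gf t ht).continuousAt
  rcases lt_or_ge (2*Real.pi*(3-Real.pi)+(Real.pi-2)*σ*(Sf σ-σ)) 0 with hc | hc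
  · -- g strictly increasing on [0, σ]
    have mono : StrictMonoOn gf (Icc 0 σ) := by
      apply strictMonoOn_of_deriv_pos (convex_Icc 0 σ)
      · exact fun t ht => (hcont t ht.1).continuousWithinAt
      · intro x hx
        rw [interior_Icc] at hx
        rw [(hasDerivAt_gf x hx.1.le).deriv]
        apply gderiv_pos x hx.1
        have hm := m_mono hx.1 hx.2
        nlinarith [Real.pi_gt_three]
    have := mono (left_mem_Icc.mpr hσ.le) (right_mem_Icc.mpr hσ.le) hσ
    rwa [gf_zero] at this
  · -- g strictly decreasing on [σ, ∞), tends to 0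
    have anti : StrictAntiOn gf (Ici σ) := by
      apply strictAntiOn_of_deriv_neg (convex_Ici σ)
      · exact fun t ht => (hcont t (hσ.le.trans ht)).continuousWithinAt
      · intro x hx
        rw [interior_Ici] at hx
        rw [(hasDerivAt_gf x (hσ.trans hx).le).deriv]
        apply gderiv_neg x (hσ.trans hx)
        have hm := m_mono hσ hx
        nlinarith [Real.pi_gt_three]
    have h1 : gf (σ+1) < gf σ := anti (self_mem_Ici) (by simp : σ+1 ∈ Ici σ) (lt_add_one σ)
    have h2 : 0 ≤ gf (σ+1) := by
      apply le_of_tendsto gf_tendsto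
      filter_upwards [eventually_ge_atTop (σ+1)] with t ht
      rcases eq_or_lt_of_le ht with rfl | hlt
      · exact le_refl _
      · exact (anti (by simp : σ+1 ∈ Ici σ) (by simp; linarith : t ∈ Ici σ) hlt).le
    linarith

/-- lower bound on the Mills ratio of the standard Gaussian:
`(1 - Φ(σ))/φ(σ) > π / (√(2π + σ²) + (π-1)σ)` for every `σ > 0`. -/
theorem stmt_6 (σ : ℝ) (hσ : 0 < σ) :
    Real.pi / (Real.sqrt (2 * Real.pi + σ ^ 2) + (Real.pi - 1) * σ)
      < (1 - stdGaussCdf σ) / stdGaussPdf σ := by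
  have hD : 0 < Real.sqrt (2 * Real.pi + σ ^ 2) + (Real.pi - 1) * σ := Df_pos σ hσ.le
  have hg := gf_pos σ hσ
  unfold gf Df Sf at hg
  rw [div_lt_div_iff₀ hD (pdf_pos σ)]
  exact (div_lt_iff₀ hD).mp (by linarith)
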